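/- Null vector component estimate: let v be the unit null vector of H'(ẑₑ), and suppose ‖H'(ẑ) − H'(ẑₑ)‖ ≤ Cε, ‖∂H(ẑ)/∂z₁‖ ≤ C₁ε, and the matrix of columns [∂H(ẑ)/∂z₂,…,∂H(ẑ)/∂zₙ] has smallest singular value ≥ c > 0. Then |vᵢ| ≤ ((C + C₁)/c)·ε for 2 ≤ i ≤ n, and hence for ε small enough, |v₁| ≥ 1/2 (v₁ is bounded away from 0). -/

import Mathlib

open Matrix

/-- Null vector component estimate: let `v` be the unit null vector of `H'(ẑₑ)`, and suppose
`‖H'(ẑ) − H'(ẑₑ)‖ ≤ Cε`, `‖∂H(ẑ)/∂z₁‖ ≤ C₁ε`, and the matrix of columns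
`[∂H(ẑ)/∂z₂,…,∂H(ẑ)/∂zₙ]` has smallest singular value `≥ c > 0`. Then
`|vᵢ| ≤ ((C + C₁)/c)·ε` for `2 ≤ i ≤ n`, and hence for `ε` small enough `|v₁| ≥ 1/2`. -/
theorem null_vector_component_estimate {n : ℕ}
    (A B : Matrix (Fin (n + 1)) (Fin (n + 1)) ℂ)  -- A = H'(ẑ), B = H'(ẑₑ)
    (v : Fin (n + 1) → ℂ) (ε C C₁ c : ℝ)
    (hε : 0 < ε) (hC : 0 < C) (hC₁ : 0 < C₁) (hc : 0 < c)
    (hv : ∑ i, ‖v i‖ ^ 2 = 1) (hnull : B *ᵥ v = 0)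
    (hAB : ∀ x : Fin (n + 1) → ℂ,
        Real.sqrt (∑ i, ‖((A - B) *ᵥ x) i‖ ^ 2) ≤ C * ε * Real.sqrt (∑ i, ‖x i‖ ^ 2))
    (hcol1 : Real.sqrt (∑ i, ‖A i 0‖ ^ 2) ≤ C₁ * ε)
    (hsub : ∀ w : Fin (n + 1) → ℂ, w 0 = 0 →
        c * Real.sqrt (∑ i, ‖w i‖ ^ 2) ≤ Real.sqrt (∑ i, ‖(A *ᵥ w) i‖ ^ 2)) :
    (∀ i, i ≠ 0 → ‖v i‖ ≤ ((C + C₁) / c) * ε) ∧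
      ((n + 1 : ℝ) * (((C + C₁) / c) * ε) ^ 2 ≤ 3 / 4 → (1 / 2 : ℝ) ≤ ‖v 0‖) := by
  -- Euclidean norm notation
  have hNorm : ∀ f : Fin (n + 1) → ℂ,
      Real.sqrt (∑ i, ‖f i‖ ^ 2) = ‖(WithLp.equiv 2 (Fin (n + 1) → ℂ)).symm f‖ := by
    intro f
    rw [EuclideanSpace.norm_eq]
    rfl
  set N : (Fin (n + 1) → ℂ) → ℝ :=
    fun f => ‖(WithLp.equiv 2 (Fin (n + 1) → ℂ)).symm f‖ with hN
  have hNorm' : ∀ f : Fin (n + 1) → ℂ, N f = Real.sqrt (∑ i, ‖f i‖ ^ 2) :=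
    fun f => (hNorm f).symm
  -- basic facts
  have hv1 : N v = 1 := by rw [hNorm', hv, Real.sqrt_one]
  have hv0le : ∀ i, ‖v i‖ ≤ 1 := by
    intro i
    have h2 : ‖v i‖ ^ 2 ≤ 1 := by
      rw [← hv]
      exact Finset.single_le_sum (f := fun j => ‖v j‖ ^ 2)
        (fun j _ => by positivity) (Finset.mem_univ i)
    nlinarith [norm_nonneg (v i)]
  -- ‖A v‖ ≤ C ε
  have hAv : N (A *ᵥ v) ≤ C * ε := by
    have h := hAB v
    rw [Matrix.sub_mulVec, hnull, sub_zero, hv, Real.sqrt_one, mul_one, ← hNorm' (A *ᵥ v)] at h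
    exact h
  -- w : v with first component zeroed
  set w : Fin (n + 1) → ℂ := fun i => if i = 0 then 0 else v i with hwdef
  have hw0 : w 0 = 0 := by simp [hwdef]
  have hvw : v = w + v 0 • (Pi.single 0 1 : Fin (n + 1) → ℂ) := by
    funext i
    by_cases hi : i = 0 <;> simp [hwdef, hi, Pi.single_apply]
  -- A *ᵥ w = A *ᵥ v - v 0 • (column 0)
  have hAw : A *ᵥ w = A *ᵥ v - v 0 • (fun i => A i 0) := by
    have : A *ᵥ v = A *ᵥ w + v 0 • (A *ᵥ (Pi.single 0 1 : Fin (n + 1) → ℂ)) := by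
      rw [← Matrix.mulVec_smul, ← Matrix.mulVec_add, ← hvw]
    rw [this]
    have hcol : A *ᵥ (Pi.single 0 1 : Fin (n + 1) → ℂ) = fun i => A i 0 := by
      funext i
      simp [Matrix.mulVec_single]
    rw [hcol]
    abel
  -- bound N (A *ᵥ w)
  have hNAw : N (A *ᵥ w) ≤ (C + C₁) * ε := by
    rw [hAw]
    have htri : N (A *ᵥ v - v 0 • fun i => A i 0)
        ≤ N (A *ᵥ v) + N (v 0 • fun i => A i 0) := by
      simp only [hN, WithLp.equiv_symm_apply, WithLp.toLp_sub]
      exact norm_sub_le _ _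
    have hsmul : N (v 0 • fun i => A i 0) = ‖v 0‖ * N (fun i => A i 0) := by
      simp only [hN, WithLp.equiv_symm_apply, WithLp.toLp_smul]
      exact norm_smul _ _
    have hc1 : N (fun i => A i 0) ≤ C₁ * ε := by rw [hNorm']; exact hcol1
    have : ‖v 0‖ * N (fun i => A i 0) ≤ C₁ * ε := by
      calc ‖v 0‖ * N (fun i => A i 0) ≤ 1 * (C₁ * ε) := by
            apply mul_le_mul (hv0le 0) hc1 (norm_nonneg _) zero_le_one
        _ = C₁ * ε := one_mul _
    calc N (A *ᵥ v - v 0 • fun i => A i 0) ≤ N (A *ᵥ v) + N (v 0 • fun i => A i 0) := htri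
      _ ≤ C * ε + C₁ * ε := by rw [hsmul]; exact add_le_add hAv this
      _ = (C + C₁) * ε := by ring
  -- bound N w
  have hNw : N w ≤ ((C + C₁) / c) * ε := by
    have h := hsub w hw0
    rw [← hNorm' w, ← hNorm' (A *ᵥ w)] at h
    have := le_trans h hNAw
    rw [div_mul_eq_mul_div, le_div_iff₀ hc]
    linarith [this]
  -- first conclusion
  have hmain : ∀ i, i ≠ 0 → ‖v i‖ ≤ ((C + C₁) / c) * ε := by
    intro i hi
    have hwi : w i = v i := by simp [hwdef, hi]
    have h1 : ‖w i‖ ≤ N w := by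
      rw [hNorm']
      have h2 : ‖w i‖ ^ 2 ≤ ∑ j, ‖w j‖ ^ 2 :=
        Finset.single_le_sum (f := fun j => ‖w j‖ ^ 2)
          (fun j _ => by positivity) (Finset.mem_univ i)
      calc ‖w i‖ = Real.sqrt (‖w i‖ ^ 2) := by
            rw [Real.sqrt_sq (norm_nonneg _)]
        _ ≤ Real.sqrt (∑ j, ‖w j‖ ^ 2) := Real.sqrt_le_sqrt h2
    rw [hwi] at h1
    exact le_trans h1 hNw
  refine ⟨hmain, fun hsmall => ?_⟩
  -- second conclusion
  set K := ((C + C₁) / c) * ε with hK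
  have hK0 : 0 ≤ K := by positivity
  have hsum : ∑ i ∈ Finset.univ.erase 0, ‖v i‖ ^ 2 ≤ (n : ℝ) * K ^ 2 := by
    have hcard : (Finset.univ.erase (0 : Fin (n + 1))).card = n := by
      rw [Finset.card_erase_of_mem (Finset.mem_univ _)]
      simp
    calc ∑ i ∈ Finset.univ.erase 0, ‖v i‖ ^ 2
        ≤ ∑ _i ∈ Finset.univ.erase (0 : Fin (n + 1)), K ^ 2 := by
          apply Finset.sum_le_sum
          intro i hi
          have hi0 : i ≠ 0 := Finset.ne_of_mem_erase hi
          exact pow_le_pow_left₀ (norm_nonneg _) (hmain i hi0) 2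
      _ = (n : ℝ) * K ^ 2 := by rw [Finset.sum_const, hcard]; ring
  have hsplit : ∑ i ∈ Finset.univ.erase 0, ‖v i‖ ^ 2 + ‖v 0‖ ^ 2 = 1 := by
    rw [Finset.sum_erase_add _ _ (Finset.mem_univ 0)]
    exact hv
  have hn1 : (n : ℝ) * K ^ 2 ≤ 3 / 4 := by
    have : (n : ℝ) * K ^ 2 ≤ ((n : ℝ) + 1) * K ^ 2 := by nlinarith
    exact le_trans this hsmall
  have hv02 : 1 / 4 ≤ ‖v 0‖ ^ 2 := by linarith
  nlinarith [norm_nonneg (v 0)]
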